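/- Let p < q be coprime positive integers and suppose n = (p+q)m. Let A be a family of subsets of [n] with p|A \ B| ≠ q|B \ A| for all distinct A, B in A. Then for each k with 0 ≤ k ≤ q−p−1, the sum of |A_j| / C(n,j) over all j with ⌈pn/(p+q)⌉ ≤ j ≤ ⌊qn/(p+q)⌋ and j ≡ k (mod q−p) is at most 1. -/

import Mathlib

open Finset

lemma exists_perm_image {n : ℕ} (A B : Finset (Fin n)) (h : A.card = B.card) :
    ∃ σ : Equiv.Perm (Fin n), A.image σ = B := by
  classical
  have hc : Fintype.card {x : Fin n // x ∈ A} = Fintype.card {x : Fin n // x ∈ B} := by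
    simpa [Fintype.card_coe] using h
  have hc' : Fintype.card {x : Fin n // ¬ x ∈ A} = Fintype.card {x : Fin n // ¬ x ∈ B} := by
    rw [Fintype.card_subtype_compl, Fintype.card_subtype_compl, hc]
  refine ⟨Equiv.subtypeCongr (Fintype.equivOfCardEq hc) (Fintype.equivOfCardEq hc'), ?_⟩
  apply Finset.eq_of_subset_of_card_le
  · intro y hy
    simp only [Finset.mem_image] at hy
    obtain ⟨x, hx, rfl⟩ := hy
    have hval : (Equiv.subtypeCongr (Fintype.equivOfCardEq hc) (Fintype.equivOfCardEq hc')) x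
        = ↑(Fintype.equivOfCardEq hc ⟨x, hx⟩) := by
      simp [Equiv.subtypeCongr, hx]
    rw [hval]
    exact (Fintype.equivOfCardEq hc ⟨x, hx⟩).2
  · rw [Finset.card_image_of_injective _ (Equiv.injective _), h]

lemma fiber_card {n : ℕ} (Q A : Finset (Fin n)) (hA : A.card = Q.card) :
    ((Finset.univ.filter (fun π : Equiv.Perm (Fin n) => Q.image π = A)).card) * n.choose Q.card
      = n.factorial := by
  classical
  have hfib : ∀ A' : Finset (Fin n), A'.card = Q.card →
      (Finset.univ.filter (fun π : Equiv.Perm (Fin n) => Q.image π = A')).card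
      = (Finset.univ.filter (fun π : Equiv.Perm (Fin n) => Q.image π = A)).card := by
    intro A' hA'
    obtain ⟨σ, hσ⟩ := exists_perm_image A' A (by rw [hA', hA])
    apply Finset.card_nbij' (i := fun π => π.trans σ) (j := fun π => π.trans σ.symm)
    · intro π hπ
      simp only [Finset.mem_coe, Finset.mem_filter, Finset.mem_univ, true_and] at hπ ⊢
      have : Q.image (π.trans σ) = (Q.image π).image σ := by
        rw [Finset.image_image]; rfl
      rw [this, hπ, hσ]
    · intro π hπ
      simp only [Finset.mem_coe, Finset.mem_filter, Finset.mem_univ, true_and] at hπ ⊢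
      have h1 : Q.image (π.trans σ.symm) = (Q.image π).image σ.symm := by
        rw [Finset.image_image]; rfl
      rw [h1, hπ, ← hσ, Finset.image_image]
      simp
    · intro π hπ; ext x; simp
    · intro π hπ; ext x; simp
  have hpart := Finset.card_eq_sum_card_fiberwise
      (f := fun π : Equiv.Perm (Fin n) => Q.image π) (s := Finset.univ)
      (t := Finset.powersetCard Q.card Finset.univ) (by
        intro π _
        rw [Finset.mem_coe, Finset.mem_powersetCard]
        exact ⟨Finset.subset_univ _, Finset.card_image_of_injective _ (Equiv.injective _)⟩)
  have hcard : (Finset.univ : Finset (Equiv.Perm (Fin n))).card = n.factorial := by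
    rw [Finset.card_univ, Fintype.card_perm, Fintype.card_fin]
  rw [hpart] at hcard
  have h2 : ∑ A' ∈ Finset.powersetCard Q.card (Finset.univ : Finset (Fin n)),
      (Finset.univ.filter (fun π : Equiv.Perm (Fin n) => Q.image π = A')).card
      = ∑ _A' ∈ Finset.powersetCard Q.card (Finset.univ : Finset (Fin n)),
      (Finset.univ.filter (fun π : Equiv.Perm (Fin n) => Q.image π = A)).card :=
    Finset.sum_congr rfl (fun A' hA' => hfib A' ((Finset.mem_powersetCard.mp hA').2))
  rw [h2, Finset.sum_const, smul_eq_mul, Finset.card_powersetCard, Finset.card_univ,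
    Fintype.card_fin, mul_comm] at hcard
  exact hcard


lemma card_filter_blocks (c m : ℕ) (hc : 0 < c) (f : ℕ → Prop) [DecidablePred f] :
    (Finset.univ.filter (fun i : Fin (c*m) => f i.val)).card
      = ∑ b ∈ Finset.range m, ((Finset.range c).filter (fun s => f (s + b*c))).card := by
  classical
  rw [Finset.card_filter]
  rw [Fin.sum_univ_eq_sum_range (fun x => if f x then 1 else 0) (c*m)]
  have := Finset.sum_nbij' (s := Finset.range (c*m))
      (t := (Finset.range m) ×ˢ (Finset.range c))
      (f := fun x => if f x then 1 else 0)
      (g := fun bs => if f (bs.2 + bs.1 * c) then 1 else 0)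
      (i := fun x => (x / c, x % c)) (j := fun bs => bs.2 + bs.1 * c)
      (by
        intro x hx
        simp only [Finset.mem_range, Finset.mem_product] at hx ⊢
        refine ⟨Nat.div_lt_iff_lt_mul hc |>.2 (by rw [Nat.mul_comm]; exact hx), Nat.mod_lt _ hc⟩)
      (by
        intro bs hbs
        simp only [Finset.mem_range, Finset.mem_product] at hbs ⊢
        have h1 : (bs.1 + 1) * c ≤ m * c := Nat.mul_le_mul_right _ (by omega)
        have h2 : (bs.1 + 1) * c = bs.1 * c + c := by ring
        have h3 : c * m = m * c := Nat.mul_comm _ _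
        omega)
      (by
        intro x hx
        exact Nat.mod_add_div' x c)
      (by
        intro bs hbs
        simp only [Finset.mem_range, Finset.mem_product] at hbs
        have h1 : (bs.2 + bs.1 * c) / c = bs.1 := by
          rw [Nat.add_mul_div_right _ _ hc, Nat.div_eq_of_lt hbs.2]
          omega
        have h2 : (bs.2 + bs.1 * c) % c = bs.2 := by
          rw [Nat.add_mul_mod_self_right, Nat.mod_eq_of_lt hbs.2]
        rw [Prod.ext_iff]
        exact ⟨h1, h2⟩)
      (by
        intro x hx
        simp only
        rw [Nat.mod_add_div' x c])
  rw [this, Finset.sum_product]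
  refine Finset.sum_congr rfl (fun b _ => ?_)
  rw [Finset.card_filter]

def memP (p q r d x : ℕ) : Prop :=
  if x / (p+q) < d then p ≤ x % (p+q)
  else if x / (p+q) = d then x % (p+q) < p + r
  else x % (p+q) < p

instance (p q r d x : ℕ) : Decidable (memP p q r d x) := by
  unfold memP; infer_instance

lemma filter_lt_card (c t : ℕ) (h : t ≤ c) :
    ((Finset.range c).filter (fun s => s < t)).card = t := by
  have : (Finset.range c).filter (fun s => s < t) = Finset.range t := by
    ext s; simp only [Finset.mem_filter, Finset.mem_range]; omega
  rw [this, Finset.card_range]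

lemma filter_ge_card (c t : ℕ) (h : t ≤ c) :
    ((Finset.range c).filter (fun s => t ≤ s)).card = c - t := by
  have : (Finset.range c).filter (fun s => t ≤ s) = Finset.Ico t c := by
    ext s; simp only [Finset.mem_filter, Finset.mem_range, Finset.mem_Ico]; omega
  rw [this, Nat.card_Ico]

lemma memP_eval (p q r d b s : ℕ) (hpq : 0 < p + q) (hs : s < p + q) :
    memP p q r d (s + b*(p+q)) ↔ (if b < d then p ≤ s else if b = d then s < p + r else s < p) := by
  unfold memP
  rw [Nat.add_mul_div_right _ _ hpq, Nat.div_eq_of_lt hs, Nat.add_mul_mod_self_right,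
    Nat.mod_eq_of_lt hs, Nat.zero_add]

lemma card_memP (p q m r : ℕ) (hp : 0 < p) (hpq : p < q) (hr : r < q - p) (d : ℕ)
    (hd : d ≤ m) (hdm : d = m → r = 0) :
    (Finset.univ.filter (fun i : Fin ((p+q)*m) => memP p q r d i.val)).card
      = p*m + r + d*(q-p) := by
  classical
  rw [card_filter_blocks _ _ (by omega)]
  have hblock : ∀ b ∈ Finset.range m,
      ((Finset.range (p+q)).filter (fun s => memP p q r d (s + b*(p+q)))).card
      = if b < d then q else if b = d then p + r else p := by
    intro b _
    rw [Finset.filter_congr (fun s hs => by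
      rw [memP_eval p q r d b s (by omega) (Finset.mem_range.mp hs)])]
    by_cases h1 : b < d
    · simp only [if_pos h1]
      rw [filter_ge_card _ _ (by omega)]; omega
    · by_cases h2 : b = d
      · simp only [if_neg h1, if_pos h2]
        rw [filter_lt_card _ _ (by omega)]
      · simp only [if_neg h1, if_neg h2]
        rw [filter_lt_card _ _ (by omega)]
  rw [Finset.sum_congr rfl hblock]
  by_cases hdm' : d = m
  · have hr0 : r = 0 := hdm hdm'
    subst hdm'
    rw [Finset.sum_congr rfl (fun b hb => by
      rw [if_pos (Finset.mem_range.mp hb)])]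
    rw [Finset.sum_const, Finset.card_range, smul_eq_mul]
    have h1 : d*(q-p) + d*p = d*q := by rw [← Nat.mul_add]; congr 1; omega
    have h2 : p*d = d*p := Nat.mul_comm _ _
    have h3 : d*q = q*d := Nat.mul_comm _ _
    omega
  · have hdltm : d < m := by omega
    rw [Finset.range_eq_Ico,
      ← Finset.sum_Ico_consecutive _ (Nat.zero_le d) (by omega : d ≤ m),
      ← Finset.sum_Ico_consecutive _ (by omega : d ≤ d+1) (by omega : d+1 ≤ m)]
    have e1 : ∑ b ∈ Finset.Ico 0 d, (if b < d then q else if b = d then p + r else p) = d * q := by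
      rw [Finset.sum_congr rfl (fun b hb => by
        rw [if_pos (Finset.mem_Ico.mp hb).2])]
      rw [Finset.sum_const, Nat.card_Ico, Nat.sub_zero, smul_eq_mul]
    have e2 : ∑ b ∈ Finset.Ico d (d+1), (if b < d then q else if b = d then p + r else p)
        = p + r := by
      rw [Nat.Ico_succ_singleton, Finset.sum_singleton, if_neg (by omega), if_pos rfl]
    have e3 : ∑ b ∈ Finset.Ico (d+1) m, (if b < d then q else if b = d then p + r else p)
        = (m - (d+1)) * p := by
      rw [Finset.sum_congr rfl (fun b hb => by
        have := Finset.mem_Ico.mp hb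
        rw [if_neg (by omega), if_neg (by omega)])]
      rw [Finset.sum_const, Nat.card_Ico, smul_eq_mul]
    rw [e1, e2, e3]
    have h1 : d*(q-p) + d*p = d*q := by rw [← Nat.mul_add]; congr 1; omega
    have h2 : (m-(d+1))*p + (d+1)*p = m*p := by rw [← Nat.add_mul]; congr 1; omega
    have h3 : (d+1)*p = d*p + p := by ring
    have h4 : p*m = m*p := Nat.mul_comm _ _
    omega

lemma card_memP_sdiff (p q m r : ℕ) (hp : 0 < p) (hpq : p < q) (hr : r < q - p)
    (d d' : ℕ) (hdd' : d < d') (hd' : d' ≤ m) :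
    (Finset.univ.filter (fun i : Fin ((p+q)*m) =>
      memP p q r d i.val ∧ ¬ memP p q r d' i.val)).card = p * (d' - d) := by
  classical
  rw [card_filter_blocks (p+q) m (by omega) (fun x => memP p q r d x ∧ ¬ memP p q r d' x)]
  have hblock : ∀ b ∈ Finset.range m,
      ((Finset.range (p+q)).filter (fun s =>
        memP p q r d (s + b*(p+q)) ∧ ¬ memP p q r d' (s + b*(p+q)))).card
      = if d ≤ b ∧ b < d' then p else 0 := by
    intro b _
    rw [Finset.filter_congr (fun s hs => by
      rw [memP_eval p q r d b s (by omega) (Finset.mem_range.mp hs),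
        memP_eval p q r d' b s (by omega) (Finset.mem_range.mp hs)])]
    by_cases h1 : d ≤ b ∧ b < d'
    · rw [if_pos h1]
      have : ∀ s ∈ Finset.range (p+q),
          ((if b < d then p ≤ s else if b = d then s < p + r else s < p) ∧
           ¬ (if b < d' then p ≤ s else if b = d' then s < p + r else s < p)) ↔ s < p := by
        intro s _
        constructor <;> intro hs <;> split_ifs at hs ⊢ <;> omega
      rw [Finset.filter_congr this, filter_lt_card _ _ (by omega)]
    · rw [if_neg h1]
      have : ∀ s ∈ Finset.range (p+q),
          ((if b < d then p ≤ s else if b = d then s < p + r else s < p) ∧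
           ¬ (if b < d' then p ≤ s else if b = d' then s < p + r else s < p)) ↔ False := by
        intro s _
        constructor <;> intro hs
        · split_ifs at hs <;> omega
        · exact hs.elim
      rw [Finset.filter_congr this]
      simp
  rw [Finset.sum_congr rfl hblock]
  rw [Finset.range_eq_Ico,
    ← Finset.sum_Ico_consecutive _ (Nat.zero_le d) (by omega : d ≤ m),
    ← Finset.sum_Ico_consecutive _ (by omega : d ≤ d') (by omega : d' ≤ m)]
  have e1 : ∑ b ∈ Finset.Ico 0 d, (if d ≤ b ∧ b < d' then p else 0) = 0 := by
    rw [Finset.sum_congr rfl (fun b hb => by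
      rw [if_neg (by have := Finset.mem_Ico.mp hb; omega)])]
    simp
  have e2 : ∑ b ∈ Finset.Ico d d', (if d ≤ b ∧ b < d' then p else 0) = (d' - d) * p := by
    rw [Finset.sum_congr rfl (fun b hb => by
      rw [if_pos (by have := Finset.mem_Ico.mp hb; omega)])]
    rw [Finset.sum_const, Nat.card_Ico, smul_eq_mul]
  have e3 : ∑ b ∈ Finset.Ico d' m, (if d ≤ b ∧ b < d' then p else 0) = 0 := by
    rw [Finset.sum_congr rfl (fun b hb => by
      rw [if_neg (by have := Finset.mem_Ico.mp hb; omega)])]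
    simp
  rw [e1, e2, e3]
  have : (d'-d)*p = p*(d'-d) := Nat.mul_comm _ _
  omega

theorem stmt_9 (p q : ℕ) (hp : 0 < p) (hpq : p < q) (hco : Nat.Coprime p q)
    (m n : ℕ) (hn : n = (p + q) * m)
    (𝒜 : Finset (Finset (Fin n)))
    (h : ∀ A ∈ 𝒜, ∀ B ∈ 𝒜, A ≠ B → p * (A \ B).card ≠ q * (B \ A).card)
    (k : ℕ) (hk : k ≤ q - p - 1) :
    ∑ j ∈ (Finset.Icc (p * m) (q * m)).filter (fun j => j % (q - p) = k),
      ((𝒜.filter (fun s => s.card = j)).card : ℝ) / (n.choose j : ℝ) ≤ 1 := by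
  classical
  subst hn
  have he : 0 < q - p := by omega
  have hk' : k < q - p := by omega
  set r := (k + (q - p) - (p * m) % (q - p)) % (q - p) with hrdef
  have hr : r < q - p := Nat.mod_lt _ he
  have ha : (p * m) % (q - p) < q - p := Nat.mod_lt _ he
  have key : (p * m + r) % (q - p) = k := by
    have h1 : (p * m + r) % (q - p) = ((p * m) % (q - p) + r) % (q - p) := by
      rw [Nat.add_mod, Nat.mod_eq_of_lt hr]
    have h2 := Nat.add_mod ((p * m) % (q - p)) (k + (q - p) - (p * m) % (q - p)) (q - p)
    rw [Nat.mod_eq_of_lt ha, ← hrdef] at h2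
    have h3 : (p * m) % (q - p) + (k + (q - p) - (p * m) % (q - p)) = k + (q - p) := by omega
    rw [h3] at h2
    rw [h1, ← h2, Nat.add_mod_right, Nat.mod_eq_of_lt hk']
  set numd := if r = 0 then m + 1 else m with hnumd
  have hqm : p * m + (q - p) * m = q * m := by rw [← Nat.add_mul]; congr 1; omega
  -- index set equality
  have hset : (Finset.Icc (p * m) (q * m)).filter (fun j => j % (q - p) = k)
      = (Finset.range numd).image (fun d => p * m + r + d * (q - p)) := by
    ext j
    simp only [Finset.mem_filter, Finset.mem_Icc, Finset.mem_image, Finset.mem_range]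
    constructor
    · rintro ⟨⟨hj1, hj2⟩, hj3⟩
      have e1 : (q - p) * (j / (q - p)) + k = j := by rw [← hj3]; exact Nat.div_add_mod j (q - p)
      have e2 : (q - p) * ((p * m + r) / (q - p)) + k = p * m + r := by
        rw [← key]; exact Nat.div_add_mod _ (q - p)
      set t := j / (q - p) with ht
      set t0 := (p * m + r) / (q - p) with ht0
      have htt0 : t0 ≤ t := by
        by_contra hcon
        have h4 : (q - p) * (t + 1) ≤ (q - p) * t0 := Nat.mul_le_mul_left _ (by omega)
        have h5 : (q - p) * (t + 1) = (q - p) * t + (q - p) := by ring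
        omega
      refine ⟨t - t0, ?_, ?_⟩
      · have h6 : (q - p) * (t - t0) + (q - p) * t0 = (q - p) * t := by
          rw [← Nat.mul_add]; congr 1; omega
        have h7 : (t - t0) * (q - p) = (q - p) * (t - t0) := Nat.mul_comm _ _
        by_cases hr0 : r = 0
        · simp only [hnumd, if_pos hr0]
          have h8 : (q - p) * (t - t0) ≤ (q - p) * m := by omega
          have := Nat.le_of_mul_le_mul_left h8 he
          omega
        · simp only [hnumd, if_neg hr0]
          have h8 : (q - p) * (t - t0) < (q - p) * m := by omega
          exact Nat.lt_of_mul_lt_mul_left h8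
      · have h6 : (q - p) * (t - t0) + (q - p) * t0 = (q - p) * t := by
          rw [← Nat.mul_add]; congr 1; omega
        have h7 : (t - t0) * (q - p) = (q - p) * (t - t0) := Nat.mul_comm _ _
        omega
    · rintro ⟨d, hd, rfl⟩
      refine ⟨⟨by omega, ?_⟩, by rw [Nat.add_mul_mod_self_right]; exact key⟩
      by_cases hr0 : r = 0
      · rw [hnumd, if_pos hr0] at hd
        have h4 : d * (q - p) ≤ m * (q - p) := Nat.mul_le_mul_right _ (by omega)
        have hc : m * (q - p) = (q - p) * m := Nat.mul_comm _ _
        omega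
      · rw [hnumd, if_neg hr0] at hd
        have h4 : (d + 1) * (q - p) ≤ m * (q - p) := Nat.mul_le_mul_right _ (by omega)
        have h5 : (d + 1) * (q - p) = d * (q - p) + (q - p) := by ring
        have hc : m * (q - p) = (q - p) * m := Nat.mul_comm _ _
        omega
  rw [hset, Finset.sum_image (by
    intro x hx y hy hxy
    simp only at hxy
    have : x * (q - p) = y * (q - p) := by omega
    exact Nat.eq_of_mul_eq_mul_right he this)]
  -- the chain sets
  set P : ℕ → Finset (Fin ((p+q)*m)) :=
    fun d => Finset.univ.filter (fun i => memP p q r d i.val) with hPdef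
  have hdle : ∀ d, d < numd → d ≤ m ∧ (d = m → r = 0) := by
    intro d hd
    by_cases hr0 : r = 0
    · rw [hnumd, if_pos hr0] at hd; exact ⟨by omega, fun _ => hr0⟩
    · rw [hnumd, if_neg hr0] at hd; exact ⟨by omega, fun hdm => by omega⟩
  have hPcard : ∀ d, d < numd → (P d).card = p * m + r + d * (q - p) := by
    intro d hd
    exact card_memP p q m r hp hpq hr d (hdle d hd).1 (hdle d hd).2
  have hPsdiff : ∀ d d', d < d' → d' < numd → (P d \ P d').card = p * (d' - d) := by
    intro d d' hdd' hd'
    have hconv : P d \ P d' = Finset.univ.filter (fun i : Fin ((p+q)*m) =>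
        memP p q r d i.val ∧ ¬ memP p q r d' i.val) := by
      ext i
      simp only [hPdef, Finset.mem_sdiff, Finset.mem_filter, Finset.mem_univ, true_and]
    rw [hconv]
    exact card_memP_sdiff p q m r hp hpq hr d d' hdd' (hdle d' hd').1
  have hPsdiff' : ∀ d d', d < d' → d' < numd → (P d' \ P d).card = q * (d' - d) := by
    intro d d' hdd' hd'
    have h1 := Finset.card_sdiff_add_card (P d') (P d)
    have h2 := Finset.card_sdiff_add_card (P d) (P d')
    rw [Finset.union_comm] at h2
    have h3 := hPsdiff d d' hdd' hd'
    have h4 := hPcard d (by omega)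
    have h5 := hPcard d' hd'
    have h6 : d * (q - p) + (d' - d) * (q - p) = d' * (q - p) := by
      rw [← Nat.add_mul]; congr 1; omega
    have h7 : q * (d' - d) = p * (d' - d) + (q - p) * (d' - d) := by
      rw [← Nat.add_mul]; congr 1; omega
    have h8 : (d' - d) * (q - p) = (q - p) * (d' - d) := Nat.mul_comm _ _
    omega
  -- at most one chain set in the family, for each permutation
  have hconflict : ∀ π : Equiv.Perm (Fin ((p+q)*m)),
      ((Finset.range numd).filter (fun d => (P d).image π ∈ 𝒜)).card ≤ 1 := by
    intro π
    rw [Finset.card_le_one]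
    intro a ha b hb
    simp only [Finset.mem_filter, Finset.mem_range] at ha hb
    by_contra hab
    have main : ∀ d d', d < d' → d' < numd → (P d).image π ∈ 𝒜 → (P d').image π ∈ 𝒜 → False := by
      intro d d' hdd' hd' hA hB
      have hinj : Function.Injective π := π.injective
      have hne : (P d').image π ≠ (P d).image π := by
        intro hcon
        have c1 : ((P d').image π).card = (P d').card := Finset.card_image_of_injective _ hinj
        have c2 : ((P d).image π).card = (P d).card := Finset.card_image_of_injective _ hinj
        rw [hcon, c2, hPcard d (by omega)] at c1
        rw [hPcard d' hd'] at c1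
        have : d * (q - p) < d' * (q - p) := Nat.mul_lt_mul_of_pos_right hdd' he
        omega
      have hcontra := h _ hB _ hA hne
      rw [← Finset.image_sdiff _ _ hinj, ← Finset.image_sdiff _ _ hinj] at hcontra
      rw [Finset.card_image_of_injective _ hinj, Finset.card_image_of_injective _ hinj] at hcontra
      rw [hPsdiff d d' hdd' hd', hPsdiff' d d' hdd' hd'] at hcontra
      exact hcontra (by ring)
    rcases lt_trichotomy a b with hlt | heq | hgt
    · exact main a b hlt hb.1 ha.2 hb.2
    · exact hab heq
    · exact main b a hgt ha.1 hb.2 ha.2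
  -- master counting inequality
  have hmain : ∑ d ∈ Finset.range numd,
      (Finset.univ.filter
        (fun π : Equiv.Perm (Fin ((p+q)*m)) => (P d).image π ∈ 𝒜)).card
      ≤ ((p+q)*m).factorial := by
    have swap : ∑ d ∈ Finset.range numd,
        (Finset.univ.filter
          (fun π : Equiv.Perm (Fin ((p+q)*m)) => (P d).image π ∈ 𝒜)).card
        = ∑ π ∈ (Finset.univ : Finset (Equiv.Perm (Fin ((p+q)*m)))),
            ((Finset.range numd).filter (fun d => (P d).image π ∈ 𝒜)).card := by
      simp_rw [Finset.card_filter]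
      exact Finset.sum_comm
    rw [swap]
    calc ∑ π ∈ (Finset.univ : Finset (Equiv.Perm (Fin ((p+q)*m)))),
            ((Finset.range numd).filter (fun d => (P d).image π ∈ 𝒜)).card
        ≤ ∑ _π ∈ (Finset.univ : Finset (Equiv.Perm (Fin ((p+q)*m)))), 1 :=
          Finset.sum_le_sum (fun π _ => hconflict π)
      _ = ((p+q)*m).factorial := by
          rw [Finset.sum_const, smul_eq_mul, mul_one, Finset.card_univ, Fintype.card_perm,
            Fintype.card_fin]
  -- positivity of binomial coefficients
  have hle : ∀ d, d < numd → p * m + r + d * (q - p) ≤ (p+q)*m := by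
    intro d hd
    obtain ⟨h1a, h1b⟩ := hdle d hd
    have h4 : q * m ≤ (p+q) * m := Nat.mul_le_mul_right _ (by omega)
    by_cases hr0 : d = m
    · have := h1b hr0
      have hc : m * (q - p) = (q - p) * m := Nat.mul_comm _ _
      have h2 : d * (q - p) ≤ m * (q - p) := Nat.mul_le_mul_right _ h1a
      omega
    · have h5 : (d + 1) * (q - p) ≤ m * (q - p) := Nat.mul_le_mul_right _ (by omega)
      have h6 : (d + 1) * (q - p) = d * (q - p) + (q - p) := by ring
      have hc : m * (q - p) = (q - p) * m := Nat.mul_comm _ _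
      omega
  have hchoose_pos : ∀ d, d < numd → 0 < ((p+q)*m).choose (p * m + r + d * (q - p)) :=
    fun d hd => Nat.choose_pos (hle d hd)
  -- per-level evaluation (natural number version)
  have hTC : ∀ d, d < numd →
      (Finset.univ.filter
        (fun π : Equiv.Perm (Fin ((p+q)*m)) => (P d).image π ∈ 𝒜)).card
        * ((p+q)*m).choose (p * m + r + d * (q - p))
      = (𝒜.filter (fun s => s.card = p * m + r + d * (q - p))).card * ((p+q)*m).factorial := by
    intro d hd
    have hfw := Finset.card_eq_sum_card_fiberwise
        (f := fun π : Equiv.Perm (Fin ((p+q)*m)) => (P d).image π)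
        (s := Finset.univ.filter
          (fun π : Equiv.Perm (Fin ((p+q)*m)) => (P d).image π ∈ 𝒜))
        (t := 𝒜.filter (fun s => s.card = p * m + r + d * (q - p)))
        (by
          intro π hπ
          simp only [Finset.mem_coe, Finset.mem_filter, Finset.mem_univ, true_and] at hπ ⊢
          exact ⟨hπ, by rw [Finset.card_image_of_injective _ π.injective, hPcard d hd]⟩)
    have hfib_eq : ∀ A ∈ 𝒜.filter (fun s => s.card = p * m + r + d * (q - p)),
        ((Finset.univ.filter
            (fun π : Equiv.Perm (Fin ((p+q)*m)) => (P d).image π ∈ 𝒜)).filter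
          (fun π : Equiv.Perm (Fin ((p+q)*m)) => (P d).image π = A)).card
        = (Finset.univ.filter
            (fun π : Equiv.Perm (Fin ((p+q)*m)) => (P d).image π = A)).card := by
      intro A hA
      rw [Finset.mem_filter] at hA
      congr 1
      ext π
      simp only [Finset.mem_filter, Finset.mem_univ, true_and]
      constructor
      · exact fun hx => hx.2
      · exact fun hx => ⟨by rw [hx]; exact hA.1, hx⟩
    rw [hfw, Finset.sum_congr rfl hfib_eq, Finset.sum_mul]
    have hsum2 : ∑ A ∈ 𝒜.filter (fun s => s.card = p * m + r + d * (q - p)),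
        (Finset.univ.filter
          (fun π : Equiv.Perm (Fin ((p+q)*m)) => (P d).image π = A)).card
          * ((p+q)*m).choose (p * m + r + d * (q - p))
        = ∑ _A ∈ 𝒜.filter (fun s => s.card = p * m + r + d * (q - p)),
            ((p+q)*m).factorial := by
      refine Finset.sum_congr rfl (fun A hA => ?_)
      rw [Finset.mem_filter] at hA
      have hAc : A.card = (P d).card := by rw [hA.2, hPcard d hd]
      have hfc := fiber_card (P d) A hAc
      rw [hPcard d hd] at hfc
      exact hfc
    rw [hsum2, Finset.sum_const, smul_eq_mul]
  -- final conversion to the reals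
  have hNfac : (0:ℝ) < (((p+q)*m).factorial : ℝ) := by exact_mod_cast Nat.factorial_pos _
  have hstep : ∀ d ∈ Finset.range numd,
      ((𝒜.filter (fun s => s.card = p * m + r + d * (q - p))).card : ℝ)
        / ((((p+q)*m).choose (p * m + r + d * (q - p))) : ℝ)
      = ((Finset.univ.filter
          (fun π : Equiv.Perm (Fin ((p+q)*m)) => (P d).image π ∈ 𝒜)).card : ℝ)
          / (((p+q)*m).factorial : ℝ) := by
    intro d hd
    rw [Finset.mem_range] at hd
    have hC : (0:ℝ) < ((((p+q)*m).choose (p * m + r + d * (q - p))) : ℝ) := by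
      exact_mod_cast hchoose_pos d hd
    have hTC' := hTC d hd
    have hTCr : ((Finset.univ.filter
          (fun π : Equiv.Perm (Fin ((p+q)*m)) => (P d).image π ∈ 𝒜)).card : ℝ)
        * ((((p+q)*m).choose (p * m + r + d * (q - p))) : ℝ)
        = ((𝒜.filter (fun s => s.card = p * m + r + d * (q - p))).card : ℝ)
          * (((p+q)*m).factorial : ℝ) := by exact_mod_cast hTC'
    rw [div_eq_div_iff hC.ne' hNfac.ne']
    linarith [hTCr]
  rw [Finset.sum_congr rfl hstep, ← Finset.sum_div, div_le_one hNfac]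
  have hcast : (∑ d ∈ Finset.range numd,
      ((Finset.univ.filter
        (fun π : Equiv.Perm (Fin ((p+q)*m)) => (P d).image π ∈ 𝒜)).card : ℝ))
      = ((∑ d ∈ Finset.range numd,
        (Finset.univ.filter
          (fun π : Equiv.Perm (Fin ((p+q)*m)) => (P d).image π ∈ 𝒜)).card : ℕ) : ℝ) := by
    push_cast; ring
  rw [hcast]
  exact_mod_cast hmain
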